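/- arXiv:1702.05195 — 4 statements merged into one kernel-verified Lean document; each statement's English description precedes it below -/
import Mathlib

section
/- Let φ be the standard normal density and γ(·;c) the density γ(μ;c) = γ₀(μ−c) where γ₀ is the standard double-exponential density (or more generally any symmetric unimodal density). For c ≥ 0, define g(x;c) = ∫ φ(x−μ) γ(μ;c) dμ. Then the ratio g(x;c)/φ(x) is strictly increasing in x on the interval (c, ∞). -/
open MeasureTheory Real

/-- Standard normal density. -/
noncomputable def stdN (x : ℝ) : ℝ := (Real.sqrt (2 * Real.pi))⁻¹ * Real.exp (-x ^ 2 / 2)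

/-- Convolution `g(x;c) = ∫ φ(x−μ) γ₀(μ−c) dμ`. -/
noncomputable def conv (γ₀ : ℝ → ℝ) (c x : ℝ) : ℝ := ∫ μ : ℝ, stdN (x - μ) * γ₀ (μ - c)

/-- Symmetric kernel after change of variables. -/
noncomputable def Kk (c x t : ℝ) : ℝ :=
  Real.exp (x * c - c ^ 2 / 2 - t ^ 2 / 2) * Real.cosh (t * (x - c))

lemma stdN_pos (x : ℝ) : 0 < stdN x := by
  apply mul_pos _ (Real.exp_pos _)
  rw [inv_pos]
  exact Real.sqrt_pos.2 (by positivity)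

lemma stdN_shift (x μ : ℝ) : stdN (x - μ) = stdN x * Real.exp (x * μ - μ ^ 2 / 2) := by
  unfold stdN
  rw [mul_assoc, ← Real.exp_add]
  ring_nf

section aux

variable {γ₀ : ℝ → ℝ} (hmeas : Measurable γ₀) (hnonneg : ∀ u, 0 ≤ γ₀ u)
  (hunimodal : ∀ u v : ℝ, |u| ≤ |v| → γ₀ v ≤ γ₀ u)

include hmeas hnonneg hunimodal in
lemma int_aux (C a : ℝ) :
    Integrable (fun t : ℝ => Real.exp (C - (t - a) ^ 2 / 2) * γ₀ t) := by
  have hbd : ∀ u, γ₀ u ≤ γ₀ 0 := fun u =>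
    hunimodal 0 u (by simp [abs_nonneg])
  have hg : Integrable (fun t : ℝ => γ₀ 0 * Real.exp (C - (t - a) ^ 2 / 2)) := by
    have h1 : Integrable (fun t : ℝ => Real.exp (-(1 / 2 : ℝ) * t ^ 2)) :=
      integrable_exp_neg_mul_sq (by norm_num)
    have h2 := (h1.comp_sub_right a).const_mul (γ₀ 0 * Real.exp C)
    refine h2.congr (Filter.Eventually.of_forall fun t => ?_)
    simp only [Function.comp]
    rw [mul_assoc, ← Real.exp_add]
    ring_nf
  refine hg.mono' ?_ (Filter.Eventually.of_forall fun t => ?_)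
  · exact ((Real.continuous_exp.comp (by continuity)).aestronglyMeasurable.mul
      hmeas.aestronglyMeasurable)
  · have h0 : 0 ≤ Real.exp (C - (t - a) ^ 2 / 2) * γ₀ t :=
      mul_nonneg (Real.exp_pos _).le (hnonneg t)
    rw [Real.norm_of_nonneg h0]
    nlinarith [hbd t, (Real.exp_pos (C - (t - a) ^ 2 / 2)).le]

include hmeas hnonneg hunimodal in
lemma int_Kk (c x : ℝ) : Integrable (fun t : ℝ => Kk c x t * γ₀ t) := by
  have h1 := int_aux hmeas hnonneg hunimodal (x ^ 2 / 2) (x - c)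
  have h2 := int_aux hmeas hnonneg hunimodal (x ^ 2 / 2) (c - x)
  have h3 := (h1.add h2).const_mul (1 / 2 : ℝ)
  refine h3.congr (Filter.Eventually.of_forall fun t => ?_)
  simp only [Pi.add_apply]
  unfold Kk
  rw [Real.cosh_eq]
  have e1 : x ^ 2 / 2 - (t - (x - c)) ^ 2 / 2 =
      (x * c - c ^ 2 / 2 - t ^ 2 / 2) + t * (x - c) := by ring
  have e2 : x ^ 2 / 2 - (t - (c - x)) ^ 2 / 2 =
      (x * c - c ^ 2 / 2 - t ^ 2 / 2) + (-(t * (x - c))) := by ring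
  rw [e1, e2, Real.exp_add, Real.exp_add]
  ring

include hmeas hnonneg hunimodal in
lemma ratio_eq (hsymm : ∀ u, γ₀ (-u) = γ₀ u) (c x : ℝ) :
    conv γ₀ c x / stdN x = ∫ t : ℝ, Kk c x t * γ₀ t := by
  have hconv : conv γ₀ c x = stdN x * ∫ μ : ℝ, Real.exp (x * μ - μ ^ 2 / 2) * γ₀ (μ - c) := by
    unfold conv
    rw [← integral_const_mul]
    congr 1; funext μ
    rw [stdN_shift, mul_assoc]
  rw [hconv, mul_comm, mul_div_assoc, div_self (stdN_pos x).ne', mul_one]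
  -- change of variables μ = t + c
  have hsub : (∫ μ : ℝ, Real.exp (x * μ - μ ^ 2 / 2) * γ₀ (μ - c))
      = ∫ t : ℝ, Real.exp (x * (t + c) - (t + c) ^ 2 / 2) * γ₀ t := by
    rw [← integral_add_right_eq_self
      (fun μ : ℝ => Real.exp (x * μ - μ ^ 2 / 2) * γ₀ (μ - c)) c]
    simp
  rw [hsub]
  set p : ℝ → ℝ := fun t => Real.exp (x * (t + c) - (t + c) ^ 2 / 2) with hp
  have hi1 : Integrable (fun t : ℝ => p t * γ₀ t) := by
    have := int_aux hmeas hnonneg hunimodal (x ^ 2 / 2) (x - c)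
    refine this.congr (Filter.Eventually.of_forall fun t => ?_)
    simp only [hp]
    congr 2; ring
  have hi2 : Integrable (fun t : ℝ => p (-t) * γ₀ t) := by
    have := int_aux hmeas hnonneg hunimodal (x ^ 2 / 2) (c - x)
    refine this.congr (Filter.Eventually.of_forall fun t => ?_)
    simp only [hp]
    congr 2; ring
  have hflip : (∫ t : ℝ, p t * γ₀ t) = ∫ t : ℝ, p (-t) * γ₀ t := by
    rw [← integral_neg_eq_self (fun t : ℝ => p t * γ₀ t)]
    congr 1; funext t
    rw [hsymm]
  have hK : ∀ t : ℝ, p t * γ₀ t + p (-t) * γ₀ t = 2 * (Kk c x t * γ₀ t) := by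
    intro t
    simp only [hp]
    unfold Kk
    rw [Real.cosh_eq]
    have e1 : x * (t + c) - (t + c) ^ 2 / 2 =
        (x * c - c ^ 2 / 2 - t ^ 2 / 2) + t * (x - c) := by ring
    have e2 : x * (-t + c) - (-t + c) ^ 2 / 2 =
        (x * c - c ^ 2 / 2 - t ^ 2 / 2) + (-(t * (x - c))) := by ring
    rw [e1, e2, Real.exp_add, Real.exp_add]
    ring
  have h2 : (∫ t : ℝ, p t * γ₀ t) + (∫ t : ℝ, p (-t) * γ₀ t)
      = 2 * ∫ t : ℝ, Kk c x t * γ₀ t := by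
    rw [← integral_add hi1 hi2, ← integral_const_mul]
    congr 1; funext t; exact hK t
  have := h2
  rw [← hflip] at this
  linarith

include hnonneg hunimodal in
lemma Kk_mono (c x y : ℝ) (hc : 0 ≤ c) (hx : c < x) (hxy : x < y) (t : ℝ) :
    Kk c x t ≤ Kk c y t := by
  unfold Kk
  have h1 : Real.exp (x * c - c ^ 2 / 2 - t ^ 2 / 2)
      ≤ Real.exp (y * c - c ^ 2 / 2 - t ^ 2 / 2) := by
    apply Real.exp_le_exp.2
    nlinarith
  have h2 : Real.cosh (t * (x - c)) ≤ Real.cosh (t * (y - c)) := by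
    rw [Real.cosh_le_cosh, abs_mul, abs_mul]
    apply mul_le_mul_of_nonneg_left _ (abs_nonneg t)
    rw [abs_of_pos (by linarith), abs_of_pos (by linarith)]
    linarith
  exact mul_le_mul h1 h2 (Real.cosh_pos _).le (Real.exp_pos _).le

include hnonneg hunimodal in
lemma Kk_strict (c x y : ℝ) (hc : 0 ≤ c) (hx : c < x) (hxy : x < y) (t : ℝ) (ht : t ≠ 0) :
    Kk c x t < Kk c y t := by
  unfold Kk
  have h1 : Real.exp (x * c - c ^ 2 / 2 - t ^ 2 / 2)
      ≤ Real.exp (y * c - c ^ 2 / 2 - t ^ 2 / 2) := by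
    apply Real.exp_le_exp.2; nlinarith
  have h2 : Real.cosh (t * (x - c)) < Real.cosh (t * (y - c)) := by
    rw [Real.cosh_lt_cosh, abs_mul, abs_mul]
    apply mul_lt_mul_of_pos_left _ (abs_pos.2 ht)
    rw [abs_of_pos (by linarith), abs_of_pos (by linarith)]
    linarith
  exact mul_lt_mul' h1 h2 (Real.cosh_pos _).le (Real.exp_pos _)

end aux

/-- For a symmetric unimodal density `γ₀` and `c ≥ 0`, the ratio `g(x;c)/φ(x)` is
strictly increasing in `x` on `(c, ∞)`. -/
theorem stmt0 (γ₀ : ℝ → ℝ) (hmeas : Measurable γ₀) (hnonneg : ∀ u, 0 ≤ γ₀ u)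
    (hint : Integrable γ₀) (hdens : ∫ u : ℝ, γ₀ u = 1)
    (hsymm : ∀ u, γ₀ (-u) = γ₀ u)
    (hunimodal : ∀ u v : ℝ, |u| ≤ |v| → γ₀ v ≤ γ₀ u)
    (c : ℝ) (hc : 0 ≤ c) :
    StrictMonoOn (fun x => conv γ₀ c x / stdN x) (Set.Ioi c) := by
  intro x hx y hy hxy
  simp only [Set.mem_Ioi] at hx hy
  simp only
  rw [ratio_eq hmeas hnonneg hunimodal hsymm c x,
    ratio_eq hmeas hnonneg hunimodal hsymm c y]
  have hix := int_Kk hmeas hnonneg hunimodal c x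
  have hiy := int_Kk hmeas hnonneg hunimodal c y
  have hD : 0 < ∫ t : ℝ, (Kk c y t * γ₀ t - Kk c x t * γ₀ t) := by
    have hDnn : ∀ t : ℝ, 0 ≤ Kk c y t * γ₀ t - Kk c x t * γ₀ t := fun t => by
      have := Kk_mono hnonneg hunimodal c x y hc hx hxy t
      have := hnonneg t
      nlinarith
    rw [integral_pos_iff_support_of_nonneg hDnn (hiy.sub hix)]
    have hsupγ : 0 < volume (Function.support γ₀) := by
      have : (0 : ℝ) < ∫ u : ℝ, γ₀ u := by rw [hdens]; norm_num
      exact (integral_pos_iff_support_of_nonneg hnonneg hint).1 this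
    have hsub : Function.support γ₀ \ {(0 : ℝ)}
        ⊆ Function.support (fun t : ℝ => Kk c y t * γ₀ t - Kk c x t * γ₀ t) := by
      intro t ht
      obtain ⟨ht1, ht2⟩ := ht
      have htne : t ≠ 0 := ht2
      have hγpos : 0 < γ₀ t := lt_of_le_of_ne (hnonneg t) (Ne.symm ht1)
      have hKlt := Kk_strict hnonneg hunimodal c x y hc hx hxy t htne
      simp only [Function.mem_support]
      have : 0 < Kk c y t * γ₀ t - Kk c x t * γ₀ t := by nlinarith
      exact this.ne'
    calc (0 : ENNReal) < volume (Function.support γ₀) := hsupγ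
      _ = volume (Function.support γ₀ \ {(0 : ℝ)}) :=
          (measure_diff_null (measure_singleton 0)).symm
      _ ≤ _ := measure_mono hsub
  rw [integral_sub hiy hix] at hD
  linarith
end

section
/- Let δ(x;w,b,c) be the posterior median under the spike-and-slab prior, assumed to be a monotone thresholding rule: δ = 0 exactly on [−t₂, t₁] with t₁,t₂ > 0, and strictly increasing outside this interval with well-defined inverse δ^{-1}(t) for t ≠ 0. Define the penalty P(θ) = ∫₀^θ (δ^{-1}(t) − t) dt for θ ≠ 0 and P(0) = 0. Then for every x ∈ ℝ, the minimizer of θ ↦ (x−θ)²/2 + P(θ) equals δ(x;w,b,c). -/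
open MeasureTheory

/-- The penalty `P(θ) = ∫₀^θ (δ⁻¹(t) − t) dt` for `θ ≠ 0`, and `P(0) = 0`. -/
noncomputable def pen (δinv : ℝ → ℝ) (θ : ℝ) : ℝ :=
  if θ = 0 then 0 else ∫ t in (0:ℝ)..θ, (δinv t - t)

/-- If `δ` is a continuous monotone thresholding rule, zero exactly on `[−t₂,t₁]`,
strictly increasing outside, with `δ(x) ≤ x` beyond `t₁` and `δ(x) ≥ x` below `−t₂`,
and `δinv` inverts it away from `0`, then for every `x` the minimizer of
`θ ↦ (x−θ)²/2 + P(θ)` over `ℝ` is `δ(x)`. -/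
theorem stmt6 (δ δinv : ℝ → ℝ) (t₁ t₂ : ℝ) (ht₁ : 0 < t₁) (ht₂ : 0 < t₂)
    (hcont : Continuous δ) (hmono : Monotone δ)
    (hzero : ∀ x : ℝ, δ x = 0 ↔ x ∈ Set.Icc (-t₂) t₁)
    (hsm₁ : StrictMonoOn δ (Set.Iic (-t₂))) (hsm₂ : StrictMonoOn δ (Set.Ici t₁))
    (hle : ∀ x : ℝ, t₁ < x → δ x ≤ x) (hge : ∀ x : ℝ, x < -t₂ → x ≤ δ x)
    (hinv₁ : ∀ t : ℝ, t ≠ 0 → δ (δinv t) = t)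
    (hinv₂ : ∀ x : ℝ, t₁ < x ∨ x < -t₂ → δinv (δ x) = x)
    (hint : ∀ θ : ℝ, IntervalIntegrable (fun t => δinv t - t) volume 0 θ) :
    ∀ x : ℝ, IsMinOn (fun θ => (x - θ) ^ 2 / 2 + pen δinv θ) Set.univ (δ x) := by
  intro x
  set s := δ x with hs
  have key₁ : ∀ t : ℝ, t ≠ 0 → s < t → x ≤ δinv t := by
    intro t ht hst
    by_contra h
    push_neg at h
    have h2 := hmono h.le
    rw [hinv₁ t ht] at h2
    exact absurd h2 (not_le.mpr hst)
  have key₂ : ∀ t : ℝ, t ≠ 0 → t < s → δinv t ≤ x := by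
    intro t ht hst
    by_contra h
    push_neg at h
    have h2 := hmono h.le
    rw [hinv₁ t ht] at h2
    exact absurd h2 (not_le.mpr hst)
  have hpen : ∀ θ : ℝ, pen δinv θ = ∫ t in (0:ℝ)..θ, (δinv t - t) := by
    intro θ; unfold pen; split
    · simp [*]
    · rfl
  rw [isMinOn_iff]
  intro θ _
  have hii : IntervalIntegrable (fun t => δinv t - t) volume s θ :=
    (hint s).symm.trans (hint θ)
  have hic : IntervalIntegrable (fun t : ℝ => t - x) volume s θ :=
    (continuous_id.sub continuous_const).intervalIntegrable s θ
  have hdiff : ((x - θ) ^ 2 / 2 + pen δinv θ) - ((x - s) ^ 2 / 2 + pen δinv s)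
      = ∫ t in s..θ, (δinv t - x) := by
    rw [hpen, hpen]
    have hsplit : (∫ t in (0:ℝ)..θ, (δinv t - t)) - (∫ t in (0:ℝ)..s, (δinv t - t))
        = ∫ t in s..θ, (δinv t - t) :=
      intervalIntegral.integral_interval_sub_left (hint θ) (hint s)
    have hA : IntervalIntegrable (fun t : ℝ => t) volume s θ :=
      continuous_id.intervalIntegrable s θ
    have hlin : (∫ t in s..θ, (t - x)) = (θ ^ 2 / 2 - x * θ) - (s ^ 2 / 2 - x * s) := by
      rw [intervalIntegral.integral_sub hA intervalIntegrable_const,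
        integral_id, intervalIntegral.integral_const]
      simp
      ring
    have hadd : (∫ t in s..θ, (δinv t - x))
        = (∫ t in s..θ, (δinv t - t)) + ∫ t in s..θ, (t - x) := by
      rw [← intervalIntegral.integral_add hii hic]
      congr 1
      ext t
      ring
    rw [hadd, ← hsplit, hlin]
    ring
  have h0 : ∀ᵐ t : ℝ ∂volume, t ∉ ({0, s} : Set ℝ) :=
    ((Set.countable_singleton s).insert 0).ae_notMem volume
  have hnn : 0 ≤ ∫ t in s..θ, (δinv t - x) := by
    rcases le_total s θ with h | h
    · apply intervalIntegral.integral_nonneg_of_ae_restrict h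
      filter_upwards [ae_restrict_of_ae h0, ae_restrict_mem measurableSet_Icc]
        with t ht htm
      simp only [Set.mem_insert_iff, Set.mem_singleton_iff, not_or] at ht
      have hst : s < t := lt_of_le_of_ne htm.1 (Ne.symm ht.2)
      have := key₁ t ht.1 hst
      simp only [Pi.zero_apply]
      linarith
    · rw [intervalIntegral.integral_symm, ← intervalIntegral.integral_neg]
      · apply intervalIntegral.integral_nonneg_of_ae_restrict h
        filter_upwards [ae_restrict_of_ae h0, ae_restrict_mem measurableSet_Icc]
          with t ht htm
        simp only [Set.mem_insert_iff, Set.mem_singleton_iff, not_or] at ht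
        have hts : t < s := lt_of_le_of_ne htm.2 ht.2
        have := key₂ t ht.1 hts
        simp only [Pi.zero_apply, neg_sub]
        linarith
  linarith [hdiff, hnn]
end

section
/- Let γ₀ be a unimodal density with |(log γ₀)'| ≤ Λ a.e., let γ(μ;c) = γ₀(μ−c), g(x;c) = ∫φ(x−μ)γ(μ;c)dμ, and m(x;w,c) = (1−w)φ(x) + w g(x;c). Then the posterior mean ζ(x;w,c) = x + ∇ log m(x;w,c) satisfies the bounded shrinkage property: |ζ(x;w,c) − x| ≤ C(1 + √(|c| + log(1/w))) for all x ∈ ℝ, where C depends only on Λ and γ₀. -/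
open MeasureTheory Real

/-- Marginal density `m(x;w,c) = (1−w)φ(x) + w g(x;c)`. -/
noncomputable def marg (γ₀ : ℝ → ℝ) (w c x : ℝ) : ℝ := (1 - w) * stdN x + w * conv γ₀ c x

/-- Posterior CDF of `μ` given `X = x` under the prior `(1−w)δ₀ + w γ₀(·−c)`
and likelihood `X | μ ∼ N(μ,1)`. -/
noncomputable def postCDF (γ₀ : ℝ → ℝ) (w c x t : ℝ) : ℝ :=
  ((1 - w) * stdN x * (if (0:ℝ) ≤ t then 1 else 0)
    + w * ∫ μ in Set.Iic t, stdN (x - μ) * γ₀ (μ - c)) / marg γ₀ w c x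

/-- Posterior median. -/
noncomputable def postMedian (γ₀ : ℝ → ℝ) (w c x : ℝ) : ℝ :=
  sInf {t : ℝ | 1 / 2 ≤ postCDF γ₀ w c x t}

lemma stdN_cont : Continuous stdN := by
  unfold stdN; fun_prop

lemma stdN_integrable : Integrable stdN := by
  have h : Integrable (fun x : ℝ => Real.exp (-(1/2) * x ^ 2)) :=
    integrable_exp_neg_mul_sq (by norm_num)
  have h2 : Integrable (fun x : ℝ => Real.exp (-x ^ 2 / 2)) := by
    convert h using 2 with x; ring_nf
  exact h2.const_mul _

lemma stdN_hasDeriv (x : ℝ) : HasDerivAt stdN (-x * stdN x) x := by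
  have h1 : HasDerivAt (fun y : ℝ => -y ^ 2 / 2) (-x) x := by
    have := ((hasDerivAt_pow 2 x).neg).div_const 2
    refine this.congr_deriv ?_; simp; ring
  have h2 := (Real.hasDerivAt_exp (-x ^ 2 / 2)).comp x h1
  have h3 := h2.const_mul ((Real.sqrt (2 * Real.pi))⁻¹)
  refine h3.congr_deriv ?_
  unfold stdN; ring

lemma stdN_le (x : ℝ) : stdN x ≤ Real.exp (-x ^ 2 / 2) := by
  have h1 : (1:ℝ) ≤ Real.sqrt (2 * Real.pi) := by
    rw [show (1:ℝ) = Real.sqrt 1 by simp]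
    exact Real.sqrt_le_sqrt (by nlinarith [Real.pi_gt_three])
  have h2 : (Real.sqrt (2 * Real.pi))⁻¹ ≤ 1 := inv_le_one_of_one_le₀ h1
  unfold stdN
  nlinarith [Real.exp_pos (-x ^ 2 / 2)]

lemma stdN_ge_on (s : ℝ) (h0 : 0 ≤ s) (h1 : s ≤ 1) : stdN 1 ≤ stdN s := by
  unfold stdN
  have h : Real.exp (-1 ^ 2 / 2) ≤ Real.exp (-s ^ 2 / 2) := by
    apply Real.exp_le_exp.mpr; nlinarith
  have hs : (0:ℝ) < (Real.sqrt (2 * Real.pi))⁻¹ :=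
    inv_pos.mpr (Real.sqrt_pos.mpr (by positivity))
  nlinarith

set_option maxHeartbeats 1000000 in
/-- Bounded shrinkage property of the posterior mean
`ζ(x;w,c) = x + ∇ log m(x;w,c)`: for a unimodal positive density `γ₀` with
`|(log γ₀)'| ≤ Λ`, there is `C > 0` (depending only on `Λ` and `γ₀`) with
`|ζ(x;w,c) − x| ≤ C(1 + √(|c| + log(1/w)))` for all `x`, all `0 < w ≤ 1` and all `c`. -/
theorem stmt10 (γ₀ : ℝ → ℝ) (Λ : ℝ) (hΛ : 0 < Λ)
    (hpos : ∀ u, 0 < γ₀ u) (hint : Integrable γ₀) (hdens : ∫ u : ℝ, γ₀ u = 1)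
    (hmode : ∃ m₀ : ℝ, MonotoneOn γ₀ (Set.Iic m₀) ∧ AntitoneOn γ₀ (Set.Ici m₀))
    (hdiff : Differentiable ℝ fun s => Real.log (γ₀ s))
    (hld : ∀ u, |deriv (fun s => Real.log (γ₀ s)) u| ≤ Λ) :
    ∃ C > (0:ℝ), ∀ w c x : ℝ, 0 < w → w ≤ 1 →
      |(x + deriv (fun y => Real.log (marg γ₀ w c y)) x) - x| ≤
        C * (1 + Real.sqrt (|c| + Real.log (1 / w))) := by
  obtain ⟨m₀, hmono, hanti⟩ := hmode
  set ℓ : ℝ → ℝ := deriv (fun s => Real.log (γ₀ s)) with hℓdef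
  set M : ℝ := γ₀ m₀ with hMdef
  have hM : ∀ u, γ₀ u ≤ M := by
    intro u
    rcases le_total u m₀ with h | h
    · exact hmono (Set.mem_Iic.mpr h) (Set.mem_Iic.mpr le_rfl) h
    · exact hanti (Set.mem_Ici.mpr le_rfl) (Set.mem_Ici.mpr h) h
  have hMpos : 0 < M := hpos m₀
  have hγcont : Continuous γ₀ := by
    have h : Continuous (fun u => Real.exp (Real.log (γ₀ u))) :=
      Real.continuous_exp.comp hdiff.continuous
    convert h using 1
    funext u; rw [Real.exp_log (hpos u)]
  have hγderiv : ∀ u, HasDerivAt γ₀ (γ₀ u * ℓ u) u := by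
    intro u
    have h1 : HasDerivAt (fun s => Real.log (γ₀ s)) (ℓ u) u := (hdiff u).hasDerivAt
    have h2 := (Real.hasDerivAt_exp (Real.log (γ₀ u))).comp u h1
    have heq : (fun s => Real.exp (Real.log (γ₀ s))) = γ₀ := funext fun s => Real.exp_log (hpos s)
    rw [Real.exp_log (hpos u)] at h2
    have h3 : HasDerivAt (fun s => Real.exp (Real.log (γ₀ s))) (γ₀ u * ℓ u) u := h2
    rwa [heq] at h3
  have hLip : LipschitzWith Λ.toNNReal (fun s => Real.log (γ₀ s)) := by
    apply lipschitzWith_of_nnnorm_deriv_le hdiff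
    intro u
    rw [← NNReal.coe_le_coe, coe_nnnorm, Real.coe_toNNReal _ hΛ.le, Real.norm_eq_abs]
    exact hld u
  have hlow : ∀ u, γ₀ 0 * Real.exp (-(Λ * |u|)) ≤ γ₀ u := by
    intro u
    have h := hLip.dist_le_mul u 0
    rw [Real.dist_eq, Real.dist_eq, sub_zero, Real.coe_toNNReal _ hΛ.le] at h
    have h2 : Real.log (γ₀ 0) - Λ * |u| ≤ Real.log (γ₀ u) := by
      have := (abs_le.mp h).1; linarith
    calc γ₀ 0 * Real.exp (-(Λ * |u|)) = Real.exp (Real.log (γ₀ 0) - Λ * |u|) := by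
          rw [Real.exp_sub, Real.exp_log (hpos 0), Real.exp_neg, ← div_eq_mul_inv]
      _ ≤ Real.exp (Real.log (γ₀ u)) := Real.exp_le_exp.mpr h2
      _ = γ₀ u := Real.exp_log (hpos u)
  -- integrability of the shifted integrand
  have hint2 : ∀ a : ℝ, Integrable (fun s => stdN s * γ₀ (a - s)) := by
    intro a
    apply Integrable.mono (stdN_integrable.const_mul M)
    · exact (stdN_cont.mul (hγcont.comp (continuous_const.sub continuous_id))).aestronglyMeasurable
    · refine Filter.Eventually.of_forall fun s => ?_
      rw [Real.norm_eq_abs, Real.norm_eq_abs, abs_mul,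
        abs_of_pos (stdN_pos s), abs_of_pos (hpos _), abs_of_pos (mul_pos hMpos (stdN_pos s))]
      nlinarith [stdN_pos s, hM (a - s), hpos (a - s)]
  have hconv_eq : ∀ c x : ℝ, conv γ₀ c x = ∫ s : ℝ, stdN s * γ₀ (x - c - s) := by
    intro c x
    unfold conv
    rw [← integral_sub_left_eq_self (fun μ => stdN (x - μ) * γ₀ (μ - c)) volume x]
    congr 1; funext s
    rw [show x - (x - s) = s by ring, show x - s - c = x - c - s by ring]
  have hconv_pos : ∀ c x : ℝ, 0 < conv γ₀ c x := by
    intro c x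
    rw [hconv_eq]
    refine (integral_pos_iff_support_of_nonneg (fun s => ?_) (hint2 (x - c))).mpr ?_
    · exact (mul_pos (stdN_pos s) (hpos _)).le
    · have hsupp : Function.support (fun s : ℝ => stdN s * γ₀ (x - c - s)) = Set.univ := by
        ext s
        simp only [Function.mem_support, Set.mem_univ, iff_true]
        exact (mul_pos (stdN_pos s) (hpos _)).ne'
      rw [hsupp]; simp
  have hℓmeas : Measurable ℓ := by rw [hℓdef]; exact measurable_deriv _
  have hconv_deriv : ∀ c x : ℝ,
      Integrable (fun s : ℝ => stdN s * (γ₀ (x - c - s) * ℓ (x - c - s))) ∧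
      HasDerivAt (fun y => conv γ₀ c y)
        (∫ s : ℝ, stdN s * (γ₀ (x - c - s) * ℓ (x - c - s))) x := by
    intro c x
    have meas_aff : Measurable fun s : ℝ => x - c - s := by fun_prop
    have key := hasDerivAt_integral_of_dominated_loc_of_deriv_le (μ := volume) (x₀ := x)
      (F := fun y s => stdN s * γ₀ (y - c - s))
      (F' := fun y s => stdN s * (γ₀ (y - c - s) * ℓ (y - c - s)))
      (bound := fun s => Λ * (M * stdN s)) (Metric.ball_mem_nhds x one_pos)
      (Filter.Eventually.of_forall fun y =>
        (stdN_cont.mul (hγcont.comp (by fun_prop))).aestronglyMeasurable)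
      (hint2 (x - c))
      (((stdN_cont.measurable).mul ((hγcont.measurable.comp meas_aff).mul
        (hℓmeas.comp meas_aff))).aestronglyMeasurable)
      (Filter.Eventually.of_forall fun s y _ => by
        rw [Real.norm_eq_abs, abs_mul, abs_mul, abs_of_pos (stdN_pos s), abs_of_pos (hpos _)]
        have h1 : γ₀ (y - c - s) * |ℓ (y - c - s)| ≤ M * Λ :=
          mul_le_mul (hM _) (hld _) (abs_nonneg _) hMpos.le
        have h2 : stdN s * (γ₀ (y - c - s) * |ℓ (y - c - s)|) ≤ Λ * (M * stdN s) := by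
          nlinarith [mul_le_mul_of_nonneg_left h1 (stdN_pos s).le]
        exact h2)
      ((stdN_integrable.const_mul M).const_mul Λ)
      (Filter.Eventually.of_forall fun s y _ => by
        have hi : HasDerivAt (fun y : ℝ => y - c - s) 1 y := by
          simpa using ((hasDerivAt_id y).sub_const c).sub_const s
        have := ((hγderiv (y - c - s)).comp y hi).const_mul (stdN s)
        simpa using this)
    refine ⟨key.1, ?_⟩
    have h2 := key.2
    have heq : (fun y => conv γ₀ c y) = fun y => ∫ s : ℝ, stdN s * γ₀ (y - c - s) :=
      funext fun y => hconv_eq c y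
    rw [heq]
    exact h2
  have hD_le : ∀ c x : ℝ,
      |∫ s : ℝ, stdN s * (γ₀ (x - c - s) * ℓ (x - c - s))| ≤ Λ * conv γ₀ c x := by
    intro c x
    calc |∫ s : ℝ, stdN s * (γ₀ (x - c - s) * ℓ (x - c - s))|
        ≤ ∫ s : ℝ, |stdN s * (γ₀ (x - c - s) * ℓ (x - c - s))| :=
          (Real.norm_eq_abs _) ▸ (norm_integral_le_integral_norm _).trans
            (le_of_eq (by simp [Real.norm_eq_abs, abs_mul]))
      _ ≤ ∫ s : ℝ, Λ * (stdN s * γ₀ (x - c - s)) := by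
          apply integral_mono (hconv_deriv c x).1.abs ((hint2 (x - c)).const_mul Λ)
          intro s
          dsimp only
          rw [abs_mul, abs_mul, abs_of_pos (stdN_pos s), abs_of_pos (hpos _)]
          have h1 : γ₀ (x - c - s) * |ℓ (x - c - s)| ≤ γ₀ (x - c - s) * Λ :=
            mul_le_mul_of_nonneg_left (hld _) (hpos _).le
          nlinarith [mul_le_mul_of_nonneg_left h1 (stdN_pos s).le]
      _ = Λ * conv γ₀ c x := by rw [integral_const_mul, ← hconv_eq]
  -- lower bound for conv
  set K : ℝ := stdN 1 * (γ₀ 0 * Real.exp (-Λ)) with hKdef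
  have hKpos : 0 < K := mul_pos (stdN_pos 1) (mul_pos (hpos 0) (Real.exp_pos _))
  have hconv_low : ∀ c x : ℝ, K * Real.exp (-(Λ * |x - c|)) ≤ conv γ₀ c x := by
    intro c x
    rw [hconv_eq]
    have h1 : ∫ s in Set.Icc (0:ℝ) 1, stdN s * γ₀ (x - c - s) ≤ ∫ s : ℝ, stdN s * γ₀ (x - c - s) :=
      setIntegral_le_integral (hint2 (x - c))
        (Filter.Eventually.of_forall fun s => (mul_pos (stdN_pos s) (hpos _)).le)
    have h2 : (stdN 1 * (γ₀ 0 * Real.exp (-(Λ * (|x - c| + 1))))) *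
        (volume (Set.Icc (0:ℝ) 1)).toReal ≤ ∫ s in Set.Icc (0:ℝ) 1, stdN s * γ₀ (x - c - s) := by
      apply setIntegral_ge_of_const_le_real measurableSet_Icc (by simp)
      · intro s hs
        obtain ⟨hs0, hs1⟩ := hs
        have hst := stdN_ge_on s hs0 hs1
        have hg : γ₀ 0 * Real.exp (-(Λ * (|x - c| + 1))) ≤ γ₀ (x - c - s) := by
          refine le_trans ?_ (hlow (x - c - s))
          refine mul_le_mul_of_nonneg_left ?_ (hpos 0).le
          apply Real.exp_le_exp.mpr
          have habs : |x - c - s| ≤ |x - c| + 1 := by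
            calc |x - c - s| = |(x - c) + (-s)| := by ring_nf
              _ ≤ |x - c| + |(-s)| := abs_add_le _ _
              _ ≤ |x - c| + 1 := by rw [abs_neg, abs_of_nonneg hs0]; linarith
          nlinarith
        nlinarith [stdN_pos 1, stdN_pos s, hpos (x - c - s),
          Real.exp_pos (-(Λ * (|x - c| + 1))), mul_pos (hpos 0) (Real.exp_pos (-(Λ * (|x - c| + 1))))]
      · exact (hint2 (x - c)).integrableOn
    have hvol : (volume (Set.Icc (0:ℝ) 1)).toReal = 1 := by
      rw [Real.volume_Icc]; simp
    rw [hvol, mul_one] at h2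
    refine le_trans (le_of_eq ?_) (le_trans h2 h1)
    rw [hKdef]
    rw [show -(Λ * (|x - c| + 1)) = -Λ + -(Λ * |x - c|) by ring, Real.exp_add]
    ring
  -- the constants
  set B : ℝ := 2 * Real.sqrt (Λ + 1) + 4 * Λ + 4 with hBdef
  have hBpos : 0 < B := by
    have := Real.sqrt_nonneg (Λ + 1); positivity
  refine ⟨Λ + B + 1 / K, by positivity, ?_⟩
  intro w c x hw hw1
  set L : ℝ := Real.log (1 / w) with hLdef
  have hL0 : 0 ≤ L := Real.log_nonneg (by rw [le_div_iff₀ hw]; linarith)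
  have hwL : w = Real.exp (-L) := by
    rw [hLdef, Real.log_div one_ne_zero hw.ne', Real.log_one]
    rw [show -(0 - Real.log w) = Real.log w by ring, Real.exp_log hw]
  set D : ℝ := ∫ s : ℝ, stdN s * (γ₀ (x - c - s) * ℓ (x - c - s)) with hDdef
  have hm_pos : 0 < marg γ₀ w c x := by
    have h1 : 0 ≤ (1 - w) * stdN x := mul_nonneg (by linarith) (stdN_pos x).le
    have h2 : 0 < w * conv γ₀ c x := mul_pos hw (hconv_pos c x)
    unfold marg; linarith
  have hmargd : HasDerivAt (fun y => marg γ₀ w c y)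
      ((1 - w) * (-x * stdN x) + w * D) x := by
    have h1 := (stdN_hasDeriv x).const_mul (1 - w)
    have h2 := ((hconv_deriv c x).2).const_mul w
    exact h1.add h2
  have hlogd : deriv (fun y => Real.log (marg γ₀ w c y)) x =
      ((1 - w) * (-x * stdN x) + w * D) / marg γ₀ w c x :=
    (hmargd.log hm_pos.ne').deriv
  rw [add_sub_cancel_left, hlogd, abs_div, abs_of_pos hm_pos, div_le_iff₀ hm_pos]
  -- bound the numerator
  set R : ℝ := Real.sqrt (|c| + L) with hRdef
  have hR0 : 0 ≤ R := Real.sqrt_nonneg _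
  have hR2 : R ^ 2 = |c| + L := Real.sq_sqrt (by positivity)
  set T : ℝ := B * (1 + R) with hTdef
  have hT0 : 0 < T := by nlinarith
  have hnum : |(1 - w) * (-x * stdN x) + w * D| ≤
      (1 - w) * (|x| * stdN x) + Λ * marg γ₀ w c x := by
    have h1 : |(1 - w) * (-x * stdN x)| = (1 - w) * (|x| * stdN x) := by
      rw [abs_mul, abs_mul, abs_of_nonneg (by linarith : (0:ℝ) ≤ 1 - w), abs_neg,
        abs_of_pos (stdN_pos x)]
    have h2 : |w * D| ≤ Λ * marg γ₀ w c x := by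
      rw [abs_mul, abs_of_pos hw]
      have h3 : w * |D| ≤ w * (Λ * conv γ₀ c x) :=
        mul_le_mul_of_nonneg_left (hD_le c x) hw.le
      have h4 : w * conv γ₀ c x ≤ marg γ₀ w c x := by
        have : 0 ≤ (1 - w) * stdN x := mul_nonneg (by linarith) (stdN_pos x).le
        unfold marg; linarith
      nlinarith [hconv_pos c x]
    calc |(1 - w) * (-x * stdN x) + w * D| ≤
        |(1 - w) * (-x * stdN x)| + |w * D| := abs_add_le _ _
      _ ≤ (1 - w) * (|x| * stdN x) + Λ * marg γ₀ w c x := by rw [h1]; linarith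
  -- the key claim
  have hkey : (1 - w) * (|x| * stdN x) ≤ (T + 1 / K) * marg γ₀ w c x := by
    rcases le_or_gt |x| T with hxT | hxT
    · have h1 : (1 - w) * stdN x ≤ marg γ₀ w c x := by
        have : 0 ≤ w * conv γ₀ c x := (mul_pos hw (hconv_pos c x)).le
        unfold marg; linarith
      have h2 : (1 - w) * (|x| * stdN x) ≤ T * ((1 - w) * stdN x) := by
        have hs := stdN_pos x
        have h1w : (0:ℝ) ≤ 1 - w := by linarith
        have := mul_le_mul_of_nonneg_right hxT (mul_nonneg h1w hs.le)
        nlinarith [this]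
      have h3 : T * ((1 - w) * stdN x) ≤ T * marg γ₀ w c x :=
        mul_le_mul_of_nonneg_left h1 hT0.le
      have h4 : 0 ≤ (1 / K) * marg γ₀ w c x :=
        mul_nonneg (one_div_pos.mpr hKpos).le hm_pos.le
      have h5 : (T + 1 / K) * marg γ₀ w c x = T * marg γ₀ w c x + (1 / K) * marg γ₀ w c x := by
        ring
      linarith
    · -- large |x|
      have hb1 : 4 * Λ + 4 ≤ |x| := by nlinarith [Real.sqrt_nonneg (Λ + 1)]
      have hsq : Real.sqrt (Λ + 1) ^ 2 = Λ + 1 := Real.sq_sqrt (by linarith)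
      have hax : 2 * Real.sqrt (Λ + 1) * R ≤ |x| := by
        nlinarith [Real.sqrt_nonneg (Λ + 1)]
      have hc1 : 4 * (Λ * |c| + L) ≤ x ^ 2 := by
        have hx2 : (2 * Real.sqrt (Λ + 1) * R) ^ 2 ≤ x ^ 2 := by
          rw [← sq_abs x]
          apply sq_le_sq' _ hax
          nlinarith [Real.sqrt_nonneg (Λ + 1), abs_nonneg x]
        have : (2 * Real.sqrt (Λ + 1) * R) ^ 2 = 4 * (Λ + 1) * (|c| + L) := by
          rw [mul_pow, mul_pow, hsq, hR2]; ring
        nlinarith [abs_nonneg c]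
      have hc2 : 4 * (Λ + 1) * |x| ≤ x ^ 2 := by
        rw [← sq_abs x]; nlinarith
      have hxc : |x - c| ≤ |x| + |c| := by
        calc |x - c| = |x + (-c)| := by ring_nf
          _ ≤ |x| + |(-c)| := abs_add_le _ _
          _ = |x| + |c| := by rw [abs_neg]
      have hc3 : |x| + (L + Λ * |x - c|) ≤ x ^ 2 / 2 := by
        have : Λ * |x - c| ≤ Λ * |x| + Λ * |c| := by nlinarith
        nlinarith
      have hexp : |x| ≤ Real.exp (x ^ 2 / 2 - (L + Λ * |x - c|)) := by
        calc |x| ≤ |x| + 1 := by linarith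
          _ ≤ Real.exp |x| := Real.add_one_le_exp _
          _ ≤ Real.exp (x ^ 2 / 2 - (L + Λ * |x - c|)) := Real.exp_le_exp.mpr (by linarith)
      have hmain : |x| * stdN x ≤ Real.exp (-(L + Λ * |x - c|)) := by
        calc |x| * stdN x ≤ Real.exp (x ^ 2 / 2 - (L + Λ * |x - c|)) * Real.exp (-x ^ 2 / 2) :=
              mul_le_mul hexp (stdN_le x) (stdN_pos x).le (Real.exp_pos _).le
          _ = Real.exp (-(L + Λ * |x - c|)) := by
              rw [← Real.exp_add]; ring_nf
      have hmlow : w * (K * Real.exp (-(Λ * |x - c|))) ≤ marg γ₀ w c x := by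
        have h4 : w * (K * Real.exp (-(Λ * |x - c|))) ≤ w * conv γ₀ c x :=
          mul_le_mul_of_nonneg_left (hconv_low c x) hw.le
        have : 0 ≤ (1 - w) * stdN x := mul_nonneg (by linarith) (stdN_pos x).le
        unfold marg; linarith
      have hw_exp : w * (K * Real.exp (-(Λ * |x - c|))) = K * Real.exp (-(L + Λ * |x - c|)) := by
        rw [hwL, show -(L + Λ * |x - c|) = -L + -(Λ * |x - c|) by ring, Real.exp_add]; ring
      have h5 : |x| * stdN x ≤ (1 / K) * marg γ₀ w c x := by
        rw [div_mul_eq_mul_div, le_div_iff₀ hKpos]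
        calc |x| * stdN x * K ≤ Real.exp (-(L + Λ * |x - c|)) * K :=
              mul_le_mul_of_nonneg_right hmain hKpos.le
          _ = w * (K * Real.exp (-(Λ * |x - c|))) := by rw [hw_exp]; ring
          _ ≤ marg γ₀ w c x := hmlow
          _ = 1 * marg γ₀ w c x := by ring
      have h6 : (1 - w) * (|x| * stdN x) ≤ |x| * stdN x := by
        nlinarith [mul_nonneg (abs_nonneg x) (stdN_pos x).le]
      have h7 : (T + 1 / K) * marg γ₀ w c x = T * marg γ₀ w c x + (1 / K) * marg γ₀ w c x := by
        ring
      have h8 : 0 ≤ T * marg γ₀ w c x := mul_nonneg hT0.le hm_pos.le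
      linarith
  -- combine
  have hfinal : (1 - w) * (|x| * stdN x) + Λ * marg γ₀ w c x ≤
      (Λ + B + 1 / K) * (1 + R) * marg γ₀ w c x := by
    have e1 : 0 ≤ Λ * R * marg γ₀ w c x := mul_nonneg (mul_nonneg hΛ.le hR0) hm_pos.le
    have e2 : 0 ≤ (1 / K) * R * marg γ₀ w c x :=
      mul_nonneg (mul_nonneg (one_div_pos.mpr hKpos).le hR0) hm_pos.le
    have e3 : (Λ + B + 1 / K) * (1 + R) * marg γ₀ w c x =
        Λ * marg γ₀ w c x + Λ * R * marg γ₀ w c x + T * marg γ₀ w c x +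
          (1 / K) * marg γ₀ w c x + (1 / K) * R * marg γ₀ w c x := by
      rw [hTdef]; ring
    have e4 : (T + 1 / K) * marg γ₀ w c x = T * marg γ₀ w c x + (1 / K) * marg γ₀ w c x := by
      ring
    linarith [hkey]
  calc |(1 - w) * (-x * stdN x) + w * D| ≤
      (1 - w) * (|x| * stdN x) + Λ * marg γ₀ w c x := hnum
    _ ≤ (Λ + B + 1 / K) * (1 + R) * marg γ₀ w c x := hfinal
end

section
/- Consider the weighted least squares problem: given weights Q_i > 0 and targets z_i = (Y_i − c/σ_i)² − 1, let (τ̃_1,…,τ̃_p) minimize Σᵢ Q_i(z_i − τ_i)² subject to the isotonic constraint τ_i ≤ τ_j whenever σ_i ≥ σ_j. Then (τ̂_1,…,τ̂_p) with τ̂_i = max(τ̃_i, 0) solves the optimization problem: minimize Σᵢ Q_i{log(1+τ_i) + (Y_i − c/σ_i)²/(1+τ_i)} subject to 0 ≤ τ_i ≤ τ_j whenever σ_i ≥ σ_j. -/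
open BigOperators

/-- If `τ̃` solves the weighted isotonic least-squares problem with targets
`zᵢ = (Yᵢ − c/σᵢ)² − 1` over the isotonic cone `{τ : σᵢ ≥ σⱼ → τᵢ ≤ τⱼ}`, then
`τ̂ᵢ = max(τ̃ᵢ, 0)` solves the constrained problem
`min ∑ᵢ Qᵢ{log(1+τᵢ) + (Yᵢ − c/σᵢ)²/(1+τᵢ)}` subject to `0 ≤ τᵢ` and the same
isotonic constraint. -/
theorem stmt14 (p : ℕ) (Q Y σs : Fin p → ℝ) (c : ℝ)
    (hQ : ∀ i, 0 < Q i) (hσ : ∀ i, 0 < σs i)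
    (τt : Fin p → ℝ)
    (hmem : ∀ i j, σs j ≤ σs i → τt i ≤ τt j)
    (hmin : IsMinOn (fun τ : Fin p → ℝ => ∑ i, Q i * (((Y i - c / σs i) ^ 2 - 1) - τ i) ^ 2)
      {τ : Fin p → ℝ | ∀ i j, σs j ≤ σs i → τ i ≤ τ j} τt) :
    (fun i => max (τt i) 0) ∈
        {τ : Fin p → ℝ | (∀ i, 0 ≤ τ i) ∧ ∀ i j, σs j ≤ σs i → τ i ≤ τ j} ∧
      IsMinOn
        (fun τ : Fin p → ℝ =>
          ∑ i, Q i * (Real.log (1 + τ i) + (Y i - c / σs i) ^ 2 / (1 + τ i)))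
        {τ : Fin p → ℝ | (∀ i, 0 ≤ τ i) ∧ ∀ i j, σs j ≤ σs i → τ i ≤ τ j}
        (fun i => max (τt i) 0) := by
  set z : Fin p → ℝ := fun i => (Y i - c / σs i) ^ 2 - 1 with hzdef
  -- Direction lemma: for any admissible direction δ, the gradient inequality holds
  have key : ∀ δ : Fin p → ℝ,
      (∀ t : ℝ, 0 < t → t ≤ 1 → ∀ i j, σs j ≤ σs i → τt i + t * δ i ≤ τt j + t * δ j) →
      ∑ i, Q i * (z i - τt i) * δ i ≤ 0 := by
    intro δ hδ
    set S := ∑ i, Q i * (z i - τt i) * δ i with hS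
    set C := ∑ i, Q i * δ i ^ 2 with hC
    have hCnn : 0 ≤ C := Finset.sum_nonneg fun i _ => mul_nonneg (hQ i).le (sq_nonneg _)
    have hexp : ∀ t : ℝ, 0 < t → t ≤ 1 → 2 * t * S ≤ t ^ 2 * C := by
      intro t ht ht1
      have hmem' : (fun i => τt i + t * δ i) ∈
          {τ : Fin p → ℝ | ∀ i j, σs j ≤ σs i → τ i ≤ τ j} :=
        fun i j hij => hδ t ht ht1 i j hij
      have h1 := isMinOn_iff.mp hmin _ hmem'
      have h2 : (∑ i, Q i * (z i - (τt i + t * δ i)) ^ 2)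
          = (∑ i, Q i * (z i - τt i) ^ 2) - 2 * t * S + t ^ 2 * C := by
        rw [hS, hC, Finset.mul_sum, Finset.mul_sum, ← Finset.sum_sub_distrib,
          ← Finset.sum_add_distrib]
        exact Finset.sum_congr rfl fun i _ => by ring
      nlinarith [h1, h2]
    rcases eq_or_lt_of_le hCnn with hC0 | hC0
    · have := hexp 1 one_pos le_rfl
      nlinarith
    · by_contra hSpos
      push_neg at hSpos
      have ht0 : 0 < min 1 (S / C) := lt_min one_pos (div_pos hSpos hC0)
      have h2 := hexp _ ht0 (min_le_left _ _)
      have h3 : min 1 (S / C) * C ≤ S := by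
        have := mul_le_mul_of_nonneg_right (min_le_right 1 (S / C)) hC0.le
        rwa [div_mul_cancel₀ S hC0.ne'] at this
      nlinarith
  -- the monotone 1-Lipschitz function h
  set g : ℝ → ℝ := fun t => -(1 + max t 0)⁻¹ with hgdef
  have hmono : ∀ a b : ℝ, a ≤ b → g a ≤ g b ∧ g b - g a ≤ b - a := by
    intro a b hab
    have hA : (1:ℝ) ≤ 1 + max a 0 := le_add_of_nonneg_right (le_max_right a 0)
    have hB : (1:ℝ) ≤ 1 + max b 0 := le_add_of_nonneg_right (le_max_right b 0)
    have hAB : 1 + max a 0 ≤ 1 + max b 0 := by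
      have := max_le_max hab (le_refl (0:ℝ)); linarith
    have hd : max b 0 - max a 0 ≤ b - a := by
      rcases max_cases a 0 with ⟨ea, ha'⟩ | ⟨ea, ha'⟩ <;>
        rcases max_cases b 0 with ⟨eb, hb'⟩ | ⟨eb, hb'⟩ <;> rw [ea, eb] <;> linarith
    have hApos : (0:ℝ) < 1 + max a 0 := by linarith
    have hBpos : (0:ℝ) < 1 + max b 0 := by linarith
    have hiAB : (1 + max b 0)⁻¹ ≤ (1 + max a 0)⁻¹ := by
      apply inv_anti₀ hApos hAB
    have hiA1 : (1 + max a 0)⁻¹ ≤ 1 := inv_le_one_of_one_le₀ hA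
    have hiB1 : (1 + max b 0)⁻¹ ≤ 1 := inv_le_one_of_one_le₀ hB
    have hiBnn : (0:ℝ) ≤ (1 + max b 0)⁻¹ := by positivity
    have hiAnn : (0:ℝ) ≤ (1 + max a 0)⁻¹ := by positivity
    constructor
    · show -(1 + max a 0)⁻¹ ≤ -(1 + max b 0)⁻¹
      linarith
    · show -(1 + max b 0)⁻¹ - -(1 + max a 0)⁻¹ ≤ b - a
      have e : (1 + max a 0)⁻¹ - (1 + max b 0)⁻¹
          = ((1 + max b 0) - (1 + max a 0)) * ((1 + max a 0)⁻¹ * (1 + max b 0)⁻¹) := by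
        field_simp
      have hprod1 : (1 + max a 0)⁻¹ * (1 + max b 0)⁻¹ ≤ 1 := mul_le_one₀ hiA1 hiBnn hiB1
      have hprodnn : 0 ≤ (1 + max a 0)⁻¹ * (1 + max b 0)⁻¹ := mul_nonneg hiAnn hiBnn
      have e2 := mul_nonneg (sub_nonneg.mpr hAB) (sub_nonneg.mpr hprod1)
      nlinarith [e, e2]
  -- the key equality
  have hE : ∑ i, Q i * (z i - τt i) * g (τt i) = 0 := by
    have h1 : ∑ i, Q i * (z i - τt i) * g (τt i) ≤ 0 := by
      apply key
      intro t ht ht1 i j hij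
      have hm := hmem i j hij
      have := (hmono _ _ hm).1
      nlinarith
    have h2 : ∑ i, Q i * (z i - τt i) * (-(g (τt i))) ≤ 0 := by
      apply key
      intro t ht ht1 i j hij
      have hm := hmem i j hij
      have := (hmono _ _ hm).2
      nlinarith
    have h3 : ∑ i, Q i * (z i - τt i) * (-(g (τt i)))
        = -∑ i, Q i * (z i - τt i) * g (τt i) := by
      rw [← Finset.sum_neg_distrib]
      exact Finset.sum_congr rfl fun i _ => by ring
    rw [h3] at h2
    linarith
  -- Bregman nonnegativity
  have hbreg : ∀ a b : ℝ, 0 ≤ a → 0 ≤ b →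
      0 ≤ Real.log (1 + b) - Real.log (1 + a) - (a - b) * (-(1 + b)⁻¹) := by
    intro a b ha hb
    have h1a : (0:ℝ) < 1 + a := by linarith
    have h1b : (0:ℝ) < 1 + b := by linarith
    have hlog := Real.log_le_sub_one_of_pos (show (0:ℝ) < (1 + a) / (1 + b) from
      div_pos h1a h1b)
    rw [Real.log_div h1a.ne' h1b.ne'] at hlog
    have he : (1 + a) / (1 + b) - 1 = (a - b) * (1 + b)⁻¹ := by
      field_simp
      ring
    nlinarith [hlog, he]
  constructor
  · exact ⟨fun i => le_max_right _ _, fun i j hij => max_le_max (hmem i j hij) le_rfl⟩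
  · rw [isMinOn_iff]
    intro x hx
    obtain ⟨hx0, hxiso⟩ := hx
    simp only
    have key2 : ∑ i, Q i * (z i - τt i) * (-(1 + x i)⁻¹) ≤ 0 := by
      apply key
      intro t ht ht1 i j hij
      have h1 : τt i ≤ τt j := hmem i j hij
      have h2 : x i ≤ x j := hxiso i j hij
      have h3 : (1 + x j)⁻¹ ≤ (1 + x i)⁻¹ := by
        apply inv_anti₀ (by linarith [hx0 i]) (by linarith)
      nlinarith
    -- pointwise Bregman identity
    have hid : ∀ i, Q i * (Real.log (1 + x i) + (Y i - c / σs i) ^ 2 / (1 + x i))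
        - Q i * (Real.log (1 + max (τt i) 0) + (Y i - c / σs i) ^ 2 / (1 + max (τt i) 0))
        = Q i * (Real.log (1 + x i) - Real.log (1 + max (τt i) 0)
            - (max (τt i) 0 - x i) * (-(1 + x i)⁻¹))
          + (Q i * (z i - τt i) * g (τt i)
          - Q i * (z i - τt i) * (-(1 + x i)⁻¹)
          + Q i * (τt i - max (τt i) 0) * (g (τt i) - (-(1 + x i)⁻¹))) := by
      intro i
      have h1x : (0:ℝ) < 1 + x i := by linarith [hx0 i]
      have h1t : (0:ℝ) < 1 + max (τt i) 0 := by
        have := le_max_right (τt i) (0:ℝ); linarith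
      simp only [hgdef, hzdef]
      field_simp
      ring
    have hsum : (∑ i, Q i * (Real.log (1 + x i) + (Y i - c / σs i) ^ 2 / (1 + x i)))
        - (∑ i, Q i * (Real.log (1 + max (τt i) 0)
            + (Y i - c / σs i) ^ 2 / (1 + max (τt i) 0)))
        = (∑ i, Q i * (Real.log (1 + x i) - Real.log (1 + max (τt i) 0)
            - (max (τt i) 0 - x i) * (-(1 + x i)⁻¹)))
          + ((∑ i, Q i * (z i - τt i) * g (τt i))
          - (∑ i, Q i * (z i - τt i) * (-(1 + x i)⁻¹))
          + (∑ i, Q i * (τt i - max (τt i) 0) * (g (τt i) - (-(1 + x i)⁻¹)))) := by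
      rw [← Finset.sum_sub_distrib, ← Finset.sum_sub_distrib, ← Finset.sum_add_distrib,
        ← Finset.sum_add_distrib]
      exact Finset.sum_congr rfl fun i _ => hid i
    have hB1 : 0 ≤ ∑ i, Q i * (Real.log (1 + x i) - Real.log (1 + max (τt i) 0)
        - (max (τt i) 0 - x i) * (-(1 + x i)⁻¹)) :=
      Finset.sum_nonneg fun i _ => mul_nonneg (hQ i).le
        (hbreg (max (τt i) 0) (x i) (le_max_right _ _) (hx0 i))
    have hB4 : 0 ≤ ∑ i, Q i * (τt i - max (τt i) 0) * (g (τt i) - (-(1 + x i)⁻¹)) := by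
      apply Finset.sum_nonneg
      intro i _
      rcases le_or_gt 0 (τt i) with hti | hti
      · rw [max_eq_left hti]
        simp
      · have hmax : max (τt i) 0 = 0 := max_eq_right hti.le
        have hg : g (τt i) = -1 := by
          simp only [hgdef, hmax]
          norm_num
        rw [hmax, hg]
        have hinv1 : (1 + x i)⁻¹ ≤ 1 := inv_le_one_of_one_le₀ (by linarith [hx0 i])
        have h4 : 0 ≤ Q i * (-(τt i)) * (1 - (1 + x i)⁻¹) :=
          mul_nonneg (mul_nonneg (hQ i).le (by linarith)) (by linarith)
        have h5 : Q i * (τt i - 0) * (-1 - -(1 + x i)⁻¹)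
            = Q i * (-(τt i)) * (1 - (1 + x i)⁻¹) := by ring
        linarith [h4, h5]
    linarith [hsum, hB1, hB4, hE, key2]
end
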